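/- Let Φ be an Orlicz function, let φ, w : ℕ → ℝ be positive, nondecreasing weight sequences (indexed by n ≥ 1) satisfying the Δ₂-condition with constants C_φ and C_w respectively. Let a, b : ℤ → ℝ≥0 be summable, set A = Σ_{j∈ℤ} a(j) and B = Σ_{j∈ℤ} b(j), and suppose M_b := inf{λ > 0 : Σ_{k≥1} Φ(b(−k)·φ(k)/λ)·w(k) ≤ 1} and M_a (defined analogously for a) are both positive and finite. Let c(n) = Σ_{j∈ℤ} a(j)·b(n−j). Then with C₋ = (1 + C_w)·C_φ, one has Σ_{k≥1} Φ(c(−k)·φ(k) / (C₋·(A·M_b + B·M_a)))·w(k) ≤ 1; in particular the Luxemburg-type norm of {c(−k)}_{k≥1} is at most C₋·(A·M_b + B·M_a). -/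

import Mathlib

open scoped ENNReal
open Filter

private lemma finJensen {Φ : ℝ → ℝ} (hΦconv : ConvexOn ℝ (Set.Ici 0) Φ) (hΦ0 : Φ 0 = 0)
    {ι : Type*} (s : Finset ι) (t x : ι → ℝ)
    (ht : ∀ i ∈ s, 0 ≤ t i) (hx : ∀ i ∈ s, 0 ≤ x i) (hts : ∑ i ∈ s, t i ≤ 1) :
    Φ (∑ i ∈ s, t i * x i) ≤ ∑ i ∈ s, t i * Φ (x i) := by
  rcases eq_or_lt_of_le (Finset.sum_nonneg ht) with hT | hT
  · have hz : ∀ i ∈ s, t i = 0 := by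
      intro i hi
      exact (Finset.sum_eq_zero_iff_of_nonneg ht).1 hT.symm i hi
    have hL : ∑ i ∈ s, t i * x i = 0 := Finset.sum_eq_zero fun i hi => by
      rw [hz i hi, zero_mul]
    have hR : ∑ i ∈ s, t i * Φ (x i) = 0 := Finset.sum_eq_zero fun i hi => by
      rw [hz i hi, zero_mul]
    rw [hL, hR, hΦ0]
  · set T : ℝ := ∑ i ∈ s, t i with hTdef
    have hmem : ∀ i ∈ s, x i ∈ Set.Ici (0:ℝ) := fun i hi => hx i hi
    have hcm := hΦconv.map_centerMass_le ht hT hmem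
    have hu0 : (0:ℝ) ≤ s.centerMass t x := by
      rw [Finset.centerMass]
      exact smul_nonneg (inv_nonneg.2 hT.le)
        (Finset.sum_nonneg fun i hi => smul_nonneg (ht i hi) (hx i hi))
    have hkey : Φ (T * s.centerMass t x) ≤ T * Φ (s.centerMass t x) := by
      have h2 := hΦconv.2 (Set.mem_Ici.2 hu0) (Set.mem_Ici.2 le_rfl) hT.le
        (by linarith : (0:ℝ) ≤ 1 - T) (by ring)
      simpa [hΦ0, smul_eq_mul] using h2
    have hsum : ∑ i ∈ s, t i * x i = T * s.centerMass t x := by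
      rw [Finset.centerMass, smul_eq_mul, ← mul_assoc, mul_inv_cancel₀ hT.ne', one_mul]
      simp [smul_eq_mul]
    have hsum2 : T * s.centerMass t (fun i => Φ (x i)) = ∑ i ∈ s, t i * Φ (x i) := by
      rw [Finset.centerMass, smul_eq_mul, ← mul_assoc, mul_inv_cancel₀ hT.ne', one_mul]
      simp [smul_eq_mul]
    calc Φ (∑ i ∈ s, t i * x i) = Φ (T * s.centerMass t x) := by rw [hsum]
      _ ≤ T * Φ (s.centerMass t x) := hkey
      _ ≤ T * s.centerMass t (fun i => Φ (x i)) := by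
          have := mul_le_mul_of_nonneg_left hcm hT.le
          exact this
      _ = ∑ i ∈ s, t i * Φ (x i) := hsum2

private lemma tsumJensen {Φ : ℝ → ℝ} (hΦc : Continuous Φ)
    (hΦconv : ConvexOn ℝ (Set.Ici 0) Φ) (hΦ0 : Φ 0 = 0) (hΦm : MonotoneOn Φ (Set.Ici 0))
    {ι : Type*} (t x : ι → ℝ) (ht : ∀ i, 0 ≤ t i) (hx : ∀ i, 0 ≤ x i)
    (htsum : Summable t) (htle : ∑' i, t i ≤ 1)
    (htx : Summable fun i => t i * x i) :
    ENNReal.ofReal (Φ (∑' i, t i * x i)) ≤ ∑' i, ENNReal.ofReal (t i * Φ (x i)) := by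
  have hΦnn : ∀ u : ℝ, 0 ≤ u → 0 ≤ Φ u := fun u hu => by
    rw [← hΦ0]; exact hΦm (Set.mem_Ici.2 le_rfl) (Set.mem_Ici.2 hu) hu
  have hS := htx.hasSum
  have h1 : Tendsto (fun s : Finset ι => ENNReal.ofReal (Φ (∑ i ∈ s, t i * x i))) atTop
      (nhds (ENNReal.ofReal (Φ (∑' i, t i * x i)))) :=
    (ENNReal.continuous_ofReal.tendsto _).comp ((hΦc.tendsto _).comp hS)
  refine le_of_tendsto h1 (Filter.Eventually.of_forall fun s => ?_)
  calc ENNReal.ofReal (Φ (∑ i ∈ s, t i * x i))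
      ≤ ENNReal.ofReal (∑ i ∈ s, t i * Φ (x i)) := by
        refine ENNReal.ofReal_le_ofReal (finJensen hΦconv hΦ0 s t x (fun i _ => ht i)
          (fun i _ => hx i) ?_)
        exact le_trans (Summable.sum_le_tsum s (fun i _ => ht i) htsum) htle
    _ = ∑ i ∈ s, ENNReal.ofReal (t i * Φ (x i)) :=
        ENNReal.ofReal_sum_of_nonneg fun i _ => mul_nonneg (ht i) (hΦnn _ (hx i))
    _ ≤ ∑' i, ENNReal.ofReal (t i * Φ (x i)) := ENNReal.sum_le_tsum s

private lemma limitLemma {Φ : ℝ → ℝ} (hΦc : Continuous Φ) (hΦm : MonotoneOn Φ (Set.Ici 0))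
    {x W : ℕ → ℝ} (hx : ∀ k, 0 ≤ x k) {lam0 : ℝ} (h0 : 0 < lam0)
    (H : ∀ lam : ℝ, lam0 < lam →
      (∑' k, ENNReal.ofReal (Φ (x k / lam)) * ENNReal.ofReal (W k)) ≤ 1) :
    (∑' k, ENNReal.ofReal (Φ (x k / lam0)) * ENNReal.ofReal (W k)) ≤ 1 := by
  have hΦle : ∀ u v : ℝ, 0 ≤ u → u ≤ v → Φ u ≤ Φ v := fun u v hu huv =>
    hΦm (Set.mem_Ici.2 hu) (Set.mem_Ici.2 (hu.trans huv)) huv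
  set f : ℕ → ℕ → ℝ≥0∞ := fun n k =>
    ENNReal.ofReal (Φ (x k / (lam0 + 1 / (n + 1)))) * ENNReal.ofReal (W k) with hf
  have hlampos : ∀ n : ℕ, 0 < lam0 + 1 / ((n:ℝ) + 1) := fun n => by positivity
  have hmono : Monotone f := by
    intro n m hnm
    intro k
    refine mul_le_mul_left (ENNReal.ofReal_le_ofReal (hΦle _ _ ?_ ?_)) _
    · exact div_nonneg (hx k) (hlampos n).le
    · apply div_le_div_of_nonneg_left (hx k) (hlampos m)
      have : 1 / ((m:ℝ) + 1) ≤ 1 / ((n:ℝ) + 1) := by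
        apply one_div_le_one_div_of_le (by positivity)
        exact_mod_cast by omega
      linarith
  have hsup : ∀ k, (⨆ n, f n k) = ENNReal.ofReal (Φ (x k / lam0)) * ENNReal.ofReal (W k) := by
    intro k
    have htend : Tendsto (fun n : ℕ => f n k) atTop
        (nhds (ENNReal.ofReal (Φ (x k / lam0)) * ENNReal.ofReal (W k))) := by
      have h1 : Tendsto (fun n : ℕ => lam0 + 1 / ((n:ℝ) + 1)) atTop (nhds lam0) := by
        have := tendsto_one_div_add_atTop_nhds_zero_nat (𝕜 := ℝ)
        simpa using tendsto_const_nhds.add this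
      have h2 : Tendsto (fun n : ℕ => x k / (lam0 + 1 / ((n:ℝ) + 1))) atTop
          (nhds (x k / lam0)) := tendsto_const_nhds.div h1 h0.ne'
      exact ENNReal.Tendsto.mul_const
        (ENNReal.continuous_ofReal.tendsto _ |>.comp ((hΦc.tendsto _).comp h2))
        (Or.inr ENNReal.ofReal_ne_top)
    exact tendsto_nhds_unique (tendsto_atTop_iSup (fun n m hnm => hmono hnm k)) htend
  calc (∑' k, ENNReal.ofReal (Φ (x k / lam0)) * ENNReal.ofReal (W k))
      = ∑' k, ⨆ n, f n k := by simp_rw [hsup]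
    _ = ∫⁻ k, ⨆ n, f n k ∂(MeasureTheory.Measure.count) := (MeasureTheory.lintegral_count _).symm
    _ = ⨆ n, ∫⁻ k, f n k ∂(MeasureTheory.Measure.count) := by
        rw [MeasureTheory.lintegral_iSup (fun n => measurable_from_nat) hmono]
    _ = ⨆ n, ∑' k, f n k := by simp_rw [MeasureTheory.lintegral_count]
    _ ≤ 1 := by
        refine iSup_le fun n => H _ ?_
        have := hlampos n
        have : (0:ℝ) < 1 / ((n:ℝ)+1) := by positivity
        linarith

set_option maxHeartbeats 1000000 in
/-- The key estimate in the proof of the main theorem: for an Orlicz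
function `Φ`, weights `φ, w` in the admissible class (positive,
nondecreasing, Δ₂), summable nonnegative `a, b : ℤ → ℝ` with sums `A, B`
and Luxemburg norms `Ma, Mb` of `{a(-k)}_{k≥1}`, `{b(-k)}_{k≥1}`, the
convolution `c` satisfies
`Σ_{k≥1} Φ(c(-k) φ k / (C₋ (A Mb + B Ma))) w k ≤ 1` with
`C₋ = (1 + C_w) C_φ`; in particular the Luxemburg norm of `{c(-k)}_{k≥1}`
is at most `C₋ (A Mb + B Ma)`. -/
theorem stmt_6 (Φ : ℝ → ℝ)
    (hΦc : Continuous Φ)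
    (hΦm : MonotoneOn Φ (Set.Ici 0))
    (hΦconv : ConvexOn ℝ (Set.Ici 0) Φ)
    (hΦ0 : Φ 0 = 0)
    (hΦtop : Tendsto Φ atTop atTop)
    (φ w : ℕ → ℝ) (Cφ Cw : ℝ)
    (hφpos : ∀ n, 1 ≤ n → 0 < φ n) (hφmono : ∀ n, 1 ≤ n → φ n ≤ φ (n + 1))
    (hφΔ₂ : ∀ n, 1 ≤ n → φ (2 * n) ≤ Cφ * φ n)
    (hwpos : ∀ n, 1 ≤ n → 0 < w n) (hwmono : ∀ n, 1 ≤ n → w n ≤ w (n + 1))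
    (hwΔ₂ : ∀ n, 1 ≤ n → w (2 * n) ≤ Cw * w n)
    (a b : ℤ → ℝ) (ha0 : ∀ j, 0 ≤ a j) (hb0 : ∀ j, 0 ≤ b j)
    (ha : Summable a) (hb : Summable b)
    (A B : ℝ) (hA : (∑' j : ℤ, a j) = A) (hB : (∑' j : ℤ, b j) = B)
    (Ma Mb : ℝ)
    (hMa : Ma = sInf {lam : ℝ | 0 < lam ∧
        (∑' k : ℕ, ENNReal.ofReal (Φ (a (-((k : ℤ) + 1)) * φ (k + 1) / lam))
          * ENNReal.ofReal (w (k + 1))) ≤ 1})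
    (hMb : Mb = sInf {lam : ℝ | 0 < lam ∧
        (∑' k : ℕ, ENNReal.ofReal (Φ (b (-((k : ℤ) + 1)) * φ (k + 1) / lam))
          * ENNReal.ofReal (w (k + 1))) ≤ 1})
    (hMapos : 0 < Ma) (hMbpos : 0 < Mb)
    (c : ℤ → ℝ) (hc : ∀ n : ℤ, c n = ∑' j : ℤ, a j * b (n - j)) :
    (∑' k : ℕ, ENNReal.ofReal
        (Φ (c (-((k : ℤ) + 1)) * φ (k + 1) / ((1 + Cw) * Cφ * (A * Mb + B * Ma))))
      * ENNReal.ofReal (w (k + 1))) ≤ 1 ∧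
    sInf {lam : ℝ | 0 < lam ∧
        (∑' k : ℕ, ENNReal.ofReal (Φ (c (-((k : ℤ) + 1)) * φ (k + 1) / lam))
          * ENNReal.ofReal (w (k + 1))) ≤ 1}
      ≤ (1 + Cw) * Cφ * (A * Mb + B * Ma) := by
  -- basic monotonicity helpers
  have hΦle : ∀ u v : ℝ, 0 ≤ u → u ≤ v → Φ u ≤ Φ v := fun u v hu huv =>
    hΦm (Set.mem_Ici.2 hu) (Set.mem_Ici.2 (hu.trans huv)) huv
  have hΦnn : ∀ u : ℝ, 0 ≤ u → 0 ≤ Φ u := fun u hu => by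
    rw [← hΦ0]; exact hΦm (Set.mem_Ici.2 le_rfl) (Set.mem_Ici.2 hu) hu
  have hφm : ∀ m n : ℕ, 1 ≤ m → m ≤ n → φ m ≤ φ n := by
    intro m n h1 hmn
    induction n, hmn using Nat.le_induction with
    | base => exact le_rfl
    | succ n hn ih => exact ih.trans (hφmono n (h1.trans hn))
  have hwm : ∀ m n : ℕ, 1 ≤ m → m ≤ n → w m ≤ w n := by
    intro m n h1 hmn
    induction n, hmn using Nat.le_induction with
    | base => exact le_rfl
    | succ n hn ih => exact ih.trans (hwmono n (h1.trans hn))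
  have hφd : ∀ m n : ℕ, 1 ≤ m → 1 ≤ n → m ≤ 2 * n → φ m ≤ Cφ * φ n := fun m n h1 hn hm2 =>
    (hφm m (2 * n) h1 hm2).trans (hφΔ₂ n hn)
  have hwd : ∀ m n : ℕ, 1 ≤ m → 1 ≤ n → m ≤ 2 * n → w m ≤ Cw * w n := fun m n h1 hn hm2 =>
    (hwm m (2 * n) h1 hm2).trans (hwΔ₂ n hn)
  have hφ2 : φ (2 * 1) = φ 2 := by norm_num
  have hw2 : w (2 * 1) = w 2 := by norm_num
  have hCφpos : 0 < Cφ := by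
    nlinarith [hφΔ₂ 1 le_rfl, hφpos 2 one_le_two, hφpos 1 le_rfl, hφ2]
  have hCφ1 : 1 ≤ Cφ := by
    nlinarith [hφΔ₂ 1 le_rfl, hφmono 1 le_rfl, hφpos 1 le_rfl, hφ2]
  have hCwpos : 0 < Cw := by
    nlinarith [hwΔ₂ 1 le_rfl, hwpos 2 one_le_two, hwpos 1 le_rfl, hw2]
  have hCw1 : 1 ≤ Cw := by
    nlinarith [hwΔ₂ 1 le_rfl, hwmono 1 le_rfl, hwpos 1 le_rfl, hw2]
  have hA0 : 0 ≤ A := hA ▸ tsum_nonneg ha0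
  have hB0 : 0 ≤ B := hB ▸ tsum_nonneg hb0
  set Sa : Set ℝ := {lam : ℝ | 0 < lam ∧
      (∑' k : ℕ, ENNReal.ofReal (Φ (a (-((k : ℤ) + 1)) * φ (k + 1) / lam))
        * ENNReal.ofReal (w (k + 1))) ≤ 1} with hSadef
  set Sb : Set ℝ := {lam : ℝ | 0 < lam ∧
      (∑' k : ℕ, ENNReal.ofReal (Φ (b (-((k : ℤ) + 1)) * φ (k + 1) / lam))
        * ENNReal.ofReal (w (k + 1))) ≤ 1} with hSbdef
  have hSabdd : BddBelow Sa := ⟨0, fun y hy => hy.1.le⟩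
  have hSbbdd : BddBelow Sb := ⟨0, fun y hy => hy.1.le⟩
  have hSane : Sa.Nonempty := by
    by_contra h
    rw [Set.not_nonempty_iff_eq_empty] at h
    rw [h, Real.sInf_empty] at hMa
    linarith
  have hSbne : Sb.Nonempty := by
    by_contra h
    rw [Set.not_nonempty_iff_eq_empty] at h
    rw [h, Real.sInf_empty] at hMb
    linarith
  -- antitonicity of the modular in lambda
  have hanti : ∀ (u : ℤ → ℝ), (∀ j, 0 ≤ u j) → ∀ lam1 lam2 : ℝ, 0 < lam1 → lam1 ≤ lam2 →
      (∑' k : ℕ, ENNReal.ofReal (Φ (u (-((k : ℤ) + 1)) * φ (k + 1) / lam2))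
        * ENNReal.ofReal (w (k + 1)))
      ≤ (∑' k : ℕ, ENNReal.ofReal (Φ (u (-((k : ℤ) + 1)) * φ (k + 1) / lam1))
        * ENNReal.ofReal (w (k + 1))) := by
    intro u hu lam1 lam2 h1 h12
    refine ENNReal.tsum_le_tsum fun k =>
      mul_le_mul_left (ENNReal.ofReal_le_ofReal (hΦle _ _ ?_ ?_)) _
    · exact div_nonneg (mul_nonneg (hu _) (hφpos (k + 1) (by omega)).le)
        (h1.trans_le h12).le
    · exact div_le_div_of_nonneg_left (mul_nonneg (hu _) (hφpos (k + 1) (by omega)).le) h1 h12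
  -- the infimum itself belongs to the set
  have hMamem : (∑' k : ℕ, ENNReal.ofReal (Φ (a (-((k : ℤ) + 1)) * φ (k + 1) / Ma))
      * ENNReal.ofReal (w (k + 1))) ≤ 1 := by
    refine limitLemma hΦc hΦm (x := fun k => a (-((k : ℤ) + 1)) * φ (k + 1))
      (W := fun k => w (k + 1))
      (fun k => mul_nonneg (ha0 _) (hφpos (k + 1) (by omega)).le) hMapos ?_
    intro lam hlam
    obtain ⟨μ, hμ, hμlt⟩ := (csInf_lt_iff hSabdd hSane).1 (by rw [← hMa]; exact hlam)
    exact le_trans (hanti a ha0 μ lam hμ.1 hμlt.le) hμ.2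
  have hMbmem : (∑' k : ℕ, ENNReal.ofReal (Φ (b (-((k : ℤ) + 1)) * φ (k + 1) / Mb))
      * ENNReal.ofReal (w (k + 1))) ≤ 1 := by
    refine limitLemma hΦc hΦm (x := fun k => b (-((k : ℤ) + 1)) * φ (k + 1))
      (W := fun k => w (k + 1))
      (fun k => mul_nonneg (hb0 _) (hφpos (k + 1) (by omega)).le) hMbpos ?_
    intro lam hlam
    obtain ⟨μ, hμ, hμlt⟩ := (csInf_lt_iff hSbbdd hSbne).1 (by rw [← hMb]; exact hlam)
    exact le_trans (hanti b hb0 μ lam hμ.1 hμlt.le) hμ.2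
  -- positivity of A and B
  have hApos : 0 < A := by
    rcases hA0.eq_or_lt with h | h
    · exfalso
      have hA0' : (∑' j : ℤ, a j) = 0 := by rw [hA, ← h]
      have haz : ∀ j, a j = 0 := fun j =>
        le_antisymm (hA0' ▸ Summable.le_tsum ha j fun _ _ => ha0 _) (ha0 j)
      have hmem2 : Ma / 2 ∈ Sa := by
        refine ⟨half_pos hMapos, ?_⟩
        have : ∀ k : ℕ, ENNReal.ofReal (Φ (a (-((k : ℤ) + 1)) * φ (k + 1) / (Ma / 2)))
            * ENNReal.ofReal (w (k + 1)) = 0 := by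
          intro k; rw [haz, zero_mul, zero_div, hΦ0, ENNReal.ofReal_zero, zero_mul]
        rw [tsum_congr this, tsum_zero]
        exact zero_le_one
      have := csInf_le hSabdd hmem2
      rw [← hMa] at this
      linarith
    · exact h
  have hBpos : 0 < B := by
    rcases hB0.eq_or_lt with h | h
    · exfalso
      have hB0' : (∑' j : ℤ, b j) = 0 := by rw [hB, ← h]
      have hbz : ∀ j, b j = 0 := fun j =>
        le_antisymm (hB0' ▸ Summable.le_tsum hb j fun _ _ => hb0 _) (hb0 j)
      have hmem2 : Mb / 2 ∈ Sb := by
        refine ⟨half_pos hMbpos, ?_⟩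
        have : ∀ k : ℕ, ENNReal.ofReal (Φ (b (-((k : ℤ) + 1)) * φ (k + 1) / (Mb / 2)))
            * ENNReal.ofReal (w (k + 1)) = 0 := by
          intro k; rw [hbz, zero_mul, zero_div, hΦ0, ENNReal.ofReal_zero, zero_mul]
        rw [tsum_congr this, tsum_zero]
        exact zero_le_one
      have := csInf_le hSbbdd hmem2
      rw [← hMb] at this
      linarith
    · exact h
  -- main constant
  set lam0 : ℝ := (1 + Cw) * Cφ * (A * Mb + B * Ma) with hlam0def
  have hABpos : 0 < A * Mb + B * Ma := by
    nlinarith [mul_pos hApos hMbpos, mul_pos hBpos hMapos]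
  have hlampos : 0 < lam0 := mul_pos (mul_pos (by linarith) hCφpos) hABpos
  have hMb' : Mb ≠ 0 := hMbpos.ne'
  have hMa' : Ma ≠ 0 := hMapos.ne'
  have hCφ' : Cφ ≠ 0 := hCφpos.ne'
  have hlam' : lam0 ≠ 0 := hlampos.ne'
  have hc1 : (0:ℝ) ≤ Mb / lam0 := div_nonneg hMbpos.le hlampos.le
  have hc2 : (0:ℝ) ≤ Cφ * Mb / lam0 := div_nonneg (mul_nonneg hCφpos.le hMbpos.le) hlampos.le
  have hc3 : (0:ℝ) ≤ Cφ * Ma / lam0 := div_nonneg (mul_nonneg hCφpos.le hMapos.le) hlampos.le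
  have hc2' : Mb / lam0 ≤ Cφ * Mb / lam0 :=
    div_le_div_of_nonneg_right (by nlinarith) hlampos.le
  set Gb : ℕ → ℝ≥0∞ := fun m =>
    ENNReal.ofReal (Φ (b (-(m:ℤ)) * φ m / Mb)) * ENNReal.ofReal (w m) with hGbdef
  set Fa : ℕ → ℝ≥0∞ := fun m =>
    ENNReal.ofReal (Φ (a (-(m:ℤ)) * φ m / Ma)) * ENNReal.ofReal (w m) with hFadef
  have hSGb : (∑' k : ℕ, Gb (k+1)) ≤ 1 := by
    refine le_trans (le_of_eq (tsum_congr fun k => ?_)) hMbmem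
    simp only [hGbdef]
    norm_cast
  have hSFa : (∑' k : ℕ, Fa (k+1)) ≤ 1 := by
    refine le_trans (le_of_eq (tsum_congr fun k => ?_)) hMamem
    simp only [hFadef]
    norm_cast
  -- Jensen weights and points
  set t : ℕ → ℤ → ℝ := fun k j => if 0 ≤ j then a j * (Mb / lam0)
    else if 2 * (-j) ≤ (k:ℤ) + 1 then a j * (Cφ * Mb / lam0)
    else b (-((k:ℤ)+1) - j) * (Cφ * Ma / lam0) with htdef
  set x : ℕ → ℤ → ℝ := fun k j => if 0 ≤ j then b (-((k:ℤ)+1) - j) * φ (k+1) / Mb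
    else if 2 * (-j) ≤ (k:ℤ) + 1 then b (-((k:ℤ)+1) - j) * φ (k+1) / (Cφ * Mb)
    else a j * φ (k+1) / (Cφ * Ma) with hxdef
  have ht0 : ∀ k j, 0 ≤ t k j := by
    intro k j; simp only [htdef]; split_ifs
    · exact mul_nonneg (ha0 _) hc1
    · exact mul_nonneg (ha0 _) hc2
    · exact mul_nonneg (hb0 _) hc3
  have hx0 : ∀ k j, 0 ≤ x k j := by
    intro k j; simp only [hxdef]; split_ifs
    · exact div_nonneg (mul_nonneg (hb0 _) (hφpos _ (by omega)).le) hMbpos.le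
    · exact div_nonneg (mul_nonneg (hb0 _) (hφpos _ (by omega)).le)
        (mul_nonneg hCφpos.le hMbpos.le)
    · exact div_nonneg (mul_nonneg (ha0 _) (hφpos _ (by omega)).le)
        (mul_nonneg hCφpos.le hMapos.le)
  have hinj : ∀ k : ℕ, Function.Injective (fun j : ℤ => -((k:ℤ)+1) - j) := by
    intro k p q h; dsimp only at h; omega
  have hbshift : ∀ k : ℕ, Summable (fun j : ℤ => b (-((k:ℤ)+1) - j)) := fun k =>
    hb.comp_injective (hinj k)
  have hbshiftsum : ∀ k : ℕ, (∑' j : ℤ, b (-((k:ℤ)+1) - j)) = B := by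
    intro k
    rw [← hB]
    have := (Equiv.subLeft (-((k:ℤ)+1))).tsum_eq b
    simpa [Equiv.subLeft] using this
  have hbound : ∀ k j,
      t k j ≤ a j * (Cφ * Mb / lam0) + b (-((k:ℤ)+1) - j) * (Cφ * Ma / lam0) := by
    intro k j; simp only [htdef]; split_ifs
    · have h1 : a j * (Mb / lam0) ≤ a j * (Cφ * Mb / lam0) :=
        mul_le_mul_of_nonneg_left hc2' (ha0 j)
      have h2 : 0 ≤ b (-((k:ℤ)+1) - j) * (Cφ * Ma / lam0) := mul_nonneg (hb0 _) hc3
      linarith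
    · have h2 : 0 ≤ b (-((k:ℤ)+1) - j) * (Cφ * Ma / lam0) := mul_nonneg (hb0 _) hc3
      linarith
    · have h2 : 0 ≤ a j * (Cφ * Mb / lam0) := mul_nonneg (ha0 _) hc2
      linarith
  have hsumbound : ∀ k : ℕ, Summable (fun j : ℤ =>
      a j * (Cφ * Mb / lam0) + b (-((k:ℤ)+1) - j) * (Cφ * Ma / lam0)) :=
    fun k => (ha.mul_right _).add ((hbshift k).mul_right _)
  have hsumt : ∀ k, Summable (t k) := fun k =>
    Summable.of_nonneg_of_le (ht0 k) (hbound k) (hsumbound k)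
  have htsum_le : ∀ k, (∑' j, t k j) ≤ 1 := by
    intro k
    have h1 := Summable.tsum_le_tsum (hbound k) (hsumt k) (hsumbound k)
    have h2 : (∑' j : ℤ, (a j * (Cφ * Mb / lam0) + b (-((k:ℤ)+1) - j) * (Cφ * Ma / lam0)))
        = A * (Cφ * Mb / lam0) + B * (Cφ * Ma / lam0) := by
      rw [Summable.tsum_add (ha.mul_right _) ((hbshift k).mul_right _), tsum_mul_right, tsum_mul_right,
        hA, hbshiftsum k]
    have h3 : A * (Cφ * Mb / lam0) + B * (Cφ * Ma / lam0) ≤ 1 := by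
      have he : A * (Cφ * Mb / lam0) + B * (Cφ * Ma / lam0)
          = (Cφ * (A * Mb + B * Ma)) / lam0 := by ring
      rw [he, div_le_one hlampos, hlam0def]
      nlinarith [mul_pos hCφpos hABpos]
    linarith [h2 ▸ h1]
  have hconvsum : ∀ k : ℕ, Summable (fun j : ℤ => a j * b (-((k:ℤ)+1) - j)) := by
    intro k
    refine Summable.of_nonneg_of_le (fun j => mul_nonneg (ha0 _) (hb0 _)) (fun j => ?_)
      (ha.mul_right B)
    exact mul_le_mul_of_nonneg_left (hB ▸ Summable.le_tsum hb _ fun _ _ => hb0 _) (ha0 j)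
  have htxeq : ∀ k j, t k j * x k j = a j * b (-((k:ℤ)+1) - j) * (φ (k+1) / lam0) := by
    intro k j; simp only [htdef, hxdef]; split_ifs
    · field_simp
    · field_simp
    · field_simp
  have hsumtx : ∀ k, Summable (fun j => t k j * x k j) := fun k =>
    ((hconvsum k).mul_right _).congr (fun j => (htxeq k j).symm)
  have hkey : ∀ k : ℕ, ENNReal.ofReal (Φ (c (-((k:ℤ)+1)) * φ (k+1) / lam0))
      ≤ ∑' j : ℤ, ENNReal.ofReal (t k j * Φ (x k j)) := by
    intro k
    have heq : (∑' j, t k j * x k j) = c (-((k:ℤ)+1)) * φ (k+1) / lam0 := by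
      rw [tsum_congr (htxeq k), tsum_mul_right, ← hc (-((k:ℤ)+1))]
      ring
    rw [← heq]
    exact tsumJensen hΦc hΦconv hΦ0 hΦm _ _ (ht0 k) (hx0 k) (hsumt k) (htsum_le k) (hsumtx k)
  -- product-of-ofReal helper
  have hmulof : ∀ (p q r s u : ℝ), 0 ≤ p → 0 ≤ r → 0 ≤ s → p * q ≤ r * (s * u) →
      ENNReal.ofReal p * ENNReal.ofReal q ≤
        ENNReal.ofReal r * (ENNReal.ofReal s * ENNReal.ofReal u) := by
    intro p q r s u hp hr hs hle
    rw [← ENNReal.ofReal_mul hp, ← ENNReal.ofReal_mul hs, ← ENNReal.ofReal_mul hr]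
    exact ENNReal.ofReal_le_ofReal hle
  -- dominating terms
  set D1 : ℕ → ℤ → ℝ≥0∞ := fun k j => if 0 ≤ j then
      ENNReal.ofReal (a j * (Mb / lam0)) * Gb (k+1+j.toNat) else 0 with hD1def
  set D2 : ℕ → ℤ → ℝ≥0∞ := fun k j => if ¬ 0 ≤ j ∧ 2 * (-j).toNat ≤ k + 1 then
      ENNReal.ofReal (a j * (Cw * (Cφ * Mb) / lam0)) * Gb (k+1-(-j).toNat) else 0 with hD2def
  set D3 : ℕ → ℤ → ℝ≥0∞ := fun k j => if ¬ 0 ≤ j ∧ k + 1 < 2 * (-j).toNat then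
      ENNReal.ofReal (b (-((k:ℤ)+1) - j) * (Cw * (Cφ * Ma) / lam0)) * Fa ((-j).toNat) else 0
    with hD3def
  -- pointwise domination
  have hpt : ∀ (k : ℕ) (j : ℤ), ENNReal.ofReal (t k j * Φ (x k j)) * ENNReal.ofReal (w (k+1))
      ≤ D1 k j + D2 k j + D3 k j := by
    intro k j
    by_cases h0 : 0 ≤ j
    · -- region 1
      refine le_trans ?_ ((self_le_add_right (D1 k j) (D2 k j)).trans
        (self_le_add_right _ (D3 k j)))
      have hidx : -((k:ℤ)+1) - j = -(((k+1+j.toNat : ℕ)):ℤ) := by omega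
      have htv : t k j = a j * (Mb / lam0) := by simp only [htdef, if_pos h0]
      have hxv : x k j = b (-(((k+1+j.toNat : ℕ)):ℤ)) * φ (k+1) / Mb := by
        simp only [hxdef, if_pos h0]; rw [hidx]
      have hD1v : D1 k j = ENNReal.ofReal (a j * (Mb / lam0)) *
          (ENNReal.ofReal (Φ (b (-(((k+1+j.toNat : ℕ)):ℤ)) * φ (k+1+j.toNat) / Mb))
            * ENNReal.ofReal (w (k+1+j.toNat))) := by
        simp only [hD1def, hGbdef, if_pos h0, mul_assoc]
      rw [htv, hxv, hD1v]
      have harg1 : (0:ℝ) ≤ b (-(((k+1+j.toNat : ℕ)):ℤ)) * φ (k+1) / Mb :=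
        div_nonneg (mul_nonneg (hb0 _) (hφpos _ (by omega)).le) hMbpos.le
      have harg2 : (0:ℝ) ≤ b (-(((k+1+j.toNat : ℕ)):ℤ)) * φ (k+1+j.toNat) / Mb :=
        div_nonneg (mul_nonneg (hb0 _) (hφpos _ (by omega)).le) hMbpos.le
      have hΦ12 : Φ (b (-(((k+1+j.toNat : ℕ)):ℤ)) * φ (k+1) / Mb)
          ≤ Φ (b (-(((k+1+j.toNat : ℕ)):ℤ)) * φ (k+1+j.toNat) / Mb) :=
        hΦle _ _ harg1 (div_le_div_of_nonneg_right
          (mul_le_mul_of_nonneg_left (hφm (k+1) (k+1+j.toNat) (by omega) (by omega)) (hb0 _))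
          hMbpos.le)
      have hw12 : w (k+1) ≤ w (k+1+j.toNat) := hwm (k+1) (k+1+j.toNat) (by omega) (by omega)
      refine hmulof _ _ _ _ _
        (mul_nonneg (mul_nonneg (ha0 j) hc1) (hΦnn _ harg1))
        (mul_nonneg (ha0 j) hc1) (hΦnn _ harg2) ?_
      have hkey2 := mul_le_mul hΦ12 hw12 (hwpos (k+1) (by omega)).le (hΦnn _ harg2)
      calc a j * (Mb / lam0) * Φ (b (-(((k+1+j.toNat : ℕ)):ℤ)) * φ (k+1) / Mb) * w (k+1)
          = a j * (Mb / lam0) * (Φ (b (-(((k+1+j.toNat : ℕ)):ℤ)) * φ (k+1) / Mb) * w (k+1)) := by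
            ring
        _ ≤ a j * (Mb / lam0) * (Φ (b (-(((k+1+j.toNat : ℕ)):ℤ)) * φ (k+1+j.toNat) / Mb)
              * w (k+1+j.toNat)) :=
            mul_le_mul_of_nonneg_left hkey2 (mul_nonneg (ha0 j) hc1)
    · by_cases h2 : 2 * (-j).toNat ≤ k + 1
      · -- region 2
        refine le_trans ?_ ((self_le_add_left (D2 k j) (D1 k j)).trans
          (self_le_add_right _ (D3 k j)))
        have h2z : 2 * (-j) ≤ (k:ℤ) + 1 := by omega
        have hi1 : 1 ≤ (-j).toNat := by omega
        have hik : (-j).toNat ≤ k := by omega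
        have hidx : -((k:ℤ)+1) - j = -(((k+1-(-j).toNat : ℕ)):ℤ) := by omega
        have htv : t k j = a j * (Cφ * Mb / lam0) := by
          simp only [htdef, if_neg h0, if_pos h2z]
        have hxv : x k j = b (-(((k+1-(-j).toNat : ℕ)):ℤ)) * φ (k+1) / (Cφ * Mb) := by
          simp only [hxdef, if_neg h0, if_pos h2z]; rw [hidx]
        have hD2v : D2 k j = ENNReal.ofReal (a j * (Cw * (Cφ * Mb) / lam0)) *
            (ENNReal.ofReal (Φ (b (-(((k+1-(-j).toNat : ℕ)):ℤ)) * φ (k+1-(-j).toNat) / Mb))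
              * ENNReal.ofReal (w (k+1-(-j).toNat))) := by
          simp only [hD2def, hGbdef, if_pos (And.intro h0 h2), mul_assoc]
        rw [htv, hxv, hD2v]
        have harg1 : (0:ℝ) ≤ b (-(((k+1-(-j).toNat : ℕ)):ℤ)) * φ (k+1) / (Cφ * Mb) :=
          div_nonneg (mul_nonneg (hb0 _) (hφpos _ (by omega)).le)
            (mul_nonneg hCφpos.le hMbpos.le)
        have harg2 : (0:ℝ) ≤ b (-(((k+1-(-j).toNat : ℕ)):ℤ)) * φ (k+1-(-j).toNat) / Mb :=
          div_nonneg (mul_nonneg (hb0 _) (hφpos _ (by omega)).le) hMbpos.le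
        have hφle2 : φ (k+1) ≤ Cφ * φ (k+1-(-j).toNat) :=
          hφd (k+1) (k+1-(-j).toNat) (by omega) (by omega) (by omega)
        have hΦ12 : Φ (b (-(((k+1-(-j).toNat : ℕ)):ℤ)) * φ (k+1) / (Cφ * Mb))
            ≤ Φ (b (-(((k+1-(-j).toNat : ℕ)):ℤ)) * φ (k+1-(-j).toNat) / Mb) := by
          refine hΦle _ _ harg1 ?_
          have h1 : b (-(((k+1-(-j).toNat : ℕ)):ℤ)) * φ (k+1)
              ≤ b (-(((k+1-(-j).toNat : ℕ)):ℤ)) * (Cφ * φ (k+1-(-j).toNat)) :=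
            mul_le_mul_of_nonneg_left hφle2 (hb0 _)
          calc b (-(((k+1-(-j).toNat : ℕ)):ℤ)) * φ (k+1) / (Cφ * Mb)
              ≤ b (-(((k+1-(-j).toNat : ℕ)):ℤ)) * (Cφ * φ (k+1-(-j).toNat)) / (Cφ * Mb) :=
                div_le_div_of_nonneg_right h1 (mul_nonneg hCφpos.le hMbpos.le)
            _ = b (-(((k+1-(-j).toNat : ℕ)):ℤ)) * φ (k+1-(-j).toNat) / Mb := by
                field_simp
        have hw12 : w (k+1) ≤ Cw * w (k+1-(-j).toNat) :=
          hwd (k+1) (k+1-(-j).toNat) (by omega) (by omega) (by omega)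
        refine hmulof _ _ _ _ _
          (mul_nonneg (mul_nonneg (ha0 j) hc2) (hΦnn _ harg1))
          (mul_nonneg (ha0 j) (div_nonneg
            (mul_nonneg hCwpos.le (mul_nonneg hCφpos.le hMbpos.le)) hlampos.le))
          (hΦnn _ harg2) ?_
        have hkey3 : Φ (b (-(((k+1-(-j).toNat : ℕ)):ℤ)) * φ (k+1) / (Cφ * Mb)) * w (k+1)
            ≤ Φ (b (-(((k+1-(-j).toNat : ℕ)):ℤ)) * φ (k+1-(-j).toNat) / Mb)
              * (Cw * w (k+1-(-j).toNat)) :=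
          mul_le_mul hΦ12 hw12 (hwpos (k+1) (by omega)).le (hΦnn _ harg2)
        calc a j * (Cφ * Mb / lam0)
              * Φ (b (-(((k+1-(-j).toNat : ℕ)):ℤ)) * φ (k+1) / (Cφ * Mb)) * w (k+1)
            = a j * (Cφ * Mb / lam0)
              * (Φ (b (-(((k+1-(-j).toNat : ℕ)):ℤ)) * φ (k+1) / (Cφ * Mb)) * w (k+1)) := by
              ring
          _ ≤ a j * (Cφ * Mb / lam0)
              * (Φ (b (-(((k+1-(-j).toNat : ℕ)):ℤ)) * φ (k+1-(-j).toNat) / Mb)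
                * (Cw * w (k+1-(-j).toNat))) :=
              mul_le_mul_of_nonneg_left hkey3 (mul_nonneg (ha0 j) hc2)
          _ = a j * (Cw * (Cφ * Mb) / lam0)
              * (Φ (b (-(((k+1-(-j).toNat : ℕ)):ℤ)) * φ (k+1-(-j).toNat) / Mb)
                * w (k+1-(-j).toNat)) := by ring
      · -- region 3
        refine le_trans ?_ (self_le_add_left (D3 k j) (D1 k j + D2 k j))
        have h2z : ¬ (2 * (-j) ≤ (k:ℤ) + 1) := by omega
        have hi1 : 1 ≤ (-j).toNat := by omega
        have hk2i : k + 1 ≤ 2 * (-j).toNat := by omega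
        have hja : j = -(((-j).toNat : ℕ) : ℤ) := by omega
        have htv : t k j = b (-((k:ℤ)+1) - j) * (Cφ * Ma / lam0) := by
          simp only [htdef, if_neg h0, if_neg h2z]
        have hxv : x k j = a (-((((-j).toNat : ℕ)) : ℤ)) * φ (k+1) / (Cφ * Ma) := by
          simp only [hxdef, if_neg h0, if_neg h2z]; rw [← hja]
        have hD3v : D3 k j = ENNReal.ofReal (b (-((k:ℤ)+1) - j) * (Cw * (Cφ * Ma) / lam0)) *
            (ENNReal.ofReal (Φ (a (-((((-j).toNat : ℕ)) : ℤ)) * φ ((-j).toNat) / Ma))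
              * ENNReal.ofReal (w ((-j).toNat))) := by
          simp only [hD3def, hFadef, if_pos (And.intro h0 (by omega : k + 1 < 2 * (-j).toNat)),
            mul_assoc]
        rw [htv, hxv, hD3v]
        have harg1 : (0:ℝ) ≤ a (-((((-j).toNat : ℕ)) : ℤ)) * φ (k+1) / (Cφ * Ma) :=
          div_nonneg (mul_nonneg (ha0 _) (hφpos _ (by omega)).le)
            (mul_nonneg hCφpos.le hMapos.le)
        have harg2 : (0:ℝ) ≤ a (-((((-j).toNat : ℕ)) : ℤ)) * φ ((-j).toNat) / Ma :=
          div_nonneg (mul_nonneg (ha0 _) (hφpos _ (by omega)).le) hMapos.le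
        have hφle2 : φ (k+1) ≤ Cφ * φ ((-j).toNat) :=
          hφd (k+1) ((-j).toNat) (by omega) (by omega) (by omega)
        have hΦ12 : Φ (a (-((((-j).toNat : ℕ)) : ℤ)) * φ (k+1) / (Cφ * Ma))
            ≤ Φ (a (-((((-j).toNat : ℕ)) : ℤ)) * φ ((-j).toNat) / Ma) := by
          refine hΦle _ _ harg1 ?_
          have h1 : a (-((((-j).toNat : ℕ)) : ℤ)) * φ (k+1)
              ≤ a (-((((-j).toNat : ℕ)) : ℤ)) * (Cφ * φ ((-j).toNat)) :=
            mul_le_mul_of_nonneg_left hφle2 (ha0 _)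
          calc a (-((((-j).toNat : ℕ)) : ℤ)) * φ (k+1) / (Cφ * Ma)
              ≤ a (-((((-j).toNat : ℕ)) : ℤ)) * (Cφ * φ ((-j).toNat)) / (Cφ * Ma) :=
                div_le_div_of_nonneg_right h1 (mul_nonneg hCφpos.le hMapos.le)
            _ = a (-((((-j).toNat : ℕ)) : ℤ)) * φ ((-j).toNat) / Ma := by
                field_simp
        have hw12 : w (k+1) ≤ Cw * w ((-j).toNat) :=
          hwd (k+1) ((-j).toNat) (by omega) (by omega) (by omega)
        refine hmulof _ _ _ _ _
          (mul_nonneg (mul_nonneg (hb0 _) hc3) (hΦnn _ harg1))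
          (mul_nonneg (hb0 _) (div_nonneg
            (mul_nonneg hCwpos.le (mul_nonneg hCφpos.le hMapos.le)) hlampos.le))
          (hΦnn _ harg2) ?_
        have hkey3 : Φ (a (-((((-j).toNat : ℕ)) : ℤ)) * φ (k+1) / (Cφ * Ma)) * w (k+1)
            ≤ Φ (a (-((((-j).toNat : ℕ)) : ℤ)) * φ ((-j).toNat) / Ma)
              * (Cw * w ((-j).toNat)) :=
          mul_le_mul hΦ12 hw12 (hwpos (k+1) (by omega)).le (hΦnn _ harg2)
        calc b (-((k:ℤ)+1) - j) * (Cφ * Ma / lam0)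
              * Φ (a (-((((-j).toNat : ℕ)) : ℤ)) * φ (k+1) / (Cφ * Ma)) * w (k+1)
            = b (-((k:ℤ)+1) - j) * (Cφ * Ma / lam0)
              * (Φ (a (-((((-j).toNat : ℕ)) : ℤ)) * φ (k+1) / (Cφ * Ma)) * w (k+1)) := by ring
          _ ≤ b (-((k:ℤ)+1) - j) * (Cφ * Ma / lam0)
              * (Φ (a (-((((-j).toNat : ℕ)) : ℤ)) * φ ((-j).toNat) / Ma)
                * (Cw * w ((-j).toNat))) :=
              mul_le_mul_of_nonneg_left hkey3 (mul_nonneg (hb0 _) hc3)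
          _ = b (-((k:ℤ)+1) - j) * (Cw * (Cφ * Ma) / lam0)
              * (Φ (a (-((((-j).toNat : ℕ)) : ℤ)) * φ ((-j).toNat) / Ma)
                * w ((-j).toNat)) := by ring
  -- assemble the three double sums
  have hTc : (∑' k : ℕ, ENNReal.ofReal (Φ (c (-((k:ℤ)+1)) * φ (k+1) / lam0))
      * ENNReal.ofReal (w (k+1))) ≤
      (∑' k : ℕ, ∑' j : ℤ, D1 k j) + (∑' k : ℕ, ∑' j : ℤ, D2 k j)
        + (∑' k : ℕ, ∑' j : ℤ, D3 k j) := by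
    calc (∑' k : ℕ, ENNReal.ofReal (Φ (c (-((k:ℤ)+1)) * φ (k+1) / lam0))
          * ENNReal.ofReal (w (k+1)))
        ≤ ∑' k : ℕ, (∑' j : ℤ, ENNReal.ofReal (t k j * Φ (x k j))) * ENNReal.ofReal (w (k+1)) :=
          ENNReal.tsum_le_tsum fun k => mul_le_mul_left (hkey k) _
      _ = ∑' k : ℕ, ∑' j : ℤ, ENNReal.ofReal (t k j * Φ (x k j)) * ENNReal.ofReal (w (k+1)) :=
          tsum_congr fun k => ENNReal.tsum_mul_right.symm
      _ ≤ ∑' k : ℕ, ∑' j : ℤ, (D1 k j + D2 k j + D3 k j) :=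
          ENNReal.tsum_le_tsum fun k => ENNReal.tsum_le_tsum fun j => hpt k j
      _ = ∑' k : ℕ, ((∑' j : ℤ, D1 k j) + (∑' j : ℤ, D2 k j) + (∑' j : ℤ, D3 k j)) :=
          tsum_congr fun k => by rw [ENNReal.tsum_add, ENNReal.tsum_add]
      _ = _ := by rw [ENNReal.tsum_add, ENNReal.tsum_add]
  have hshiftGb : ∀ n : ℕ, (∑' k : ℕ, Gb (k+1+n)) ≤ ∑' k : ℕ, Gb (k+1) := by
    intro n
    have h := ENNReal.tsum_comp_le_tsum_of_injective
      (f := fun k : ℕ => k + n) (fun p q hpq => by dsimp only at hpq; omega) (fun k => Gb (k+1))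
    exact le_trans (le_of_eq (tsum_congr fun k => by rw [Nat.add_right_comm])) h
  have hS1 : (∑' k : ℕ, ∑' j : ℤ, D1 k j) ≤ ENNReal.ofReal (A * (Mb / lam0)) := by
    rw [ENNReal.tsum_comm]
    have hj : ∀ j : ℤ, (∑' k : ℕ, D1 k j) ≤ ENNReal.ofReal (a j * (Mb / lam0)) := by
      intro j
      by_cases h0 : 0 ≤ j
      · have hv : ∀ k, D1 k j = ENNReal.ofReal (a j * (Mb / lam0)) * Gb (k+1+j.toNat) :=
          fun k => by simp only [hD1def, if_pos h0]
        rw [tsum_congr hv, ENNReal.tsum_mul_left]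
        calc ENNReal.ofReal (a j * (Mb / lam0)) * (∑' k : ℕ, Gb (k+1+j.toNat))
            ≤ ENNReal.ofReal (a j * (Mb / lam0)) * 1 :=
              mul_le_mul_right ((hshiftGb j.toNat).trans hSGb) _
          _ = ENNReal.ofReal (a j * (Mb / lam0)) := mul_one _
      · have hv : ∀ k, D1 k j = 0 := fun k => by simp only [hD1def, if_neg h0]
        rw [tsum_congr hv, tsum_zero]
        exact zero_le
    calc (∑' j : ℤ, ∑' k : ℕ, D1 k j) ≤ ∑' j : ℤ, ENNReal.ofReal (a j * (Mb / lam0)) :=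
          ENNReal.tsum_le_tsum hj
      _ = ENNReal.ofReal (∑' j : ℤ, a j * (Mb / lam0)) :=
          (ENNReal.ofReal_tsum_of_nonneg (fun j => mul_nonneg (ha0 j) hc1)
            (ha.mul_right _)).symm
      _ = ENNReal.ofReal (A * (Mb / lam0)) := by rw [tsum_mul_right, hA]
  have hcoeb : (0:ℝ) ≤ Cw * (Cφ * Mb) / lam0 :=
    div_nonneg (mul_nonneg hCwpos.le (mul_nonneg hCφpos.le hMbpos.le)) hlampos.le
  have hcoea : (0:ℝ) ≤ Cw * (Cφ * Ma) / lam0 :=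
    div_nonneg (mul_nonneg hCwpos.le (mul_nonneg hCφpos.le hMapos.le)) hlampos.le
  have hshiftGb2 : ∀ i : ℕ, 1 ≤ i →
      (∑' k : ℕ, (if 2*i ≤ k+1 then Gb (k+1-i) else 0)) ≤ ∑' k : ℕ, Gb (k+1) := by
    intro i hi
    have hsupp : Function.support (fun k : ℕ => if 2*i ≤ k+1 then Gb (k+1-i) else 0)
        ⊆ Set.range (fun n : ℕ => n + (2*i-1)) := by
      intro k hk
      rw [Function.mem_support] at hk
      by_cases hc2 : 2*i ≤ k+1
      · exact ⟨k - (2*i-1), by dsimp only; omega⟩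
      · rw [if_neg hc2] at hk
        exact absurd rfl hk
    have heq := (show Function.Injective (fun n : ℕ => n + (2*i-1)) from
      fun p q hpq => by dsimp only at hpq; omega).tsum_eq hsupp
    rw [← heq]
    have hv : ∀ n : ℕ, (if 2*i ≤ (n + (2*i-1))+1 then Gb ((n + (2*i-1))+1-i) else 0)
        = Gb (n+i) := by
      intro n
      rw [if_pos (by omega)]
      congr 1
      omega
    rw [tsum_congr hv]
    have h := ENNReal.tsum_comp_le_tsum_of_injective
      (f := fun n : ℕ => n + (i-1)) (fun p q hpq => by dsimp only at hpq; omega) (fun k => Gb (k+1))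
    exact le_trans (le_of_eq (tsum_congr fun n => by congr 1; omega)) h
  have hS2 : (∑' k : ℕ, ∑' j : ℤ, D2 k j) ≤ ENNReal.ofReal (A * (Cw * (Cφ * Mb) / lam0)) := by
    rw [ENNReal.tsum_comm]
    have hj : ∀ j : ℤ, (∑' k : ℕ, D2 k j)
        ≤ ENNReal.ofReal (a j * (Cw * (Cφ * Mb) / lam0)) := by
      intro j
      by_cases h0 : 0 ≤ j
      · have hv : ∀ k, D2 k j = 0 := fun k => by
          simp only [hD2def]
          rw [if_neg (fun hcon => hcon.1 h0)]
        rw [tsum_congr hv, tsum_zero]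
        exact zero_le
      · have h1i : 1 ≤ (-j).toNat := by omega
        have hv : ∀ k, D2 k j = ENNReal.ofReal (a j * (Cw * (Cφ * Mb) / lam0))
            * (if 2*(-j).toNat ≤ k+1 then Gb (k+1-(-j).toNat) else 0) := by
          intro k
          simp only [hD2def]
          by_cases hc2 : 2*(-j).toNat ≤ k+1
          · rw [if_pos (And.intro h0 hc2), if_pos hc2]
          · rw [if_neg (fun hcon => hc2 hcon.2), if_neg hc2, mul_zero]
        rw [tsum_congr hv, ENNReal.tsum_mul_left]
        calc ENNReal.ofReal (a j * (Cw * (Cφ * Mb) / lam0))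
              * (∑' k : ℕ, (if 2*(-j).toNat ≤ k+1 then Gb (k+1-(-j).toNat) else 0))
            ≤ ENNReal.ofReal (a j * (Cw * (Cφ * Mb) / lam0)) * 1 :=
              mul_le_mul_right ((hshiftGb2 _ h1i).trans hSGb) _
          _ = ENNReal.ofReal (a j * (Cw * (Cφ * Mb) / lam0)) := mul_one _
    calc (∑' j : ℤ, ∑' k : ℕ, D2 k j)
        ≤ ∑' j : ℤ, ENNReal.ofReal (a j * (Cw * (Cφ * Mb) / lam0)) := ENNReal.tsum_le_tsum hj
      _ = ENNReal.ofReal (∑' j : ℤ, a j * (Cw * (Cφ * Mb) / lam0)) :=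
          (ENNReal.ofReal_tsum_of_nonneg (fun j => mul_nonneg (ha0 j) hcoeb)
            (ha.mul_right _)).symm
      _ = ENNReal.ofReal (A * (Cw * (Cφ * Mb) / lam0)) := by rw [tsum_mul_right, hA]
  have hS3 : (∑' k : ℕ, ∑' j : ℤ, D3 k j) ≤ ENNReal.ofReal (B * (Cw * (Cφ * Ma) / lam0)) := by
    rw [ENNReal.tsum_comm]
    have hj : ∀ j : ℤ, (∑' k : ℕ, D3 k j) ≤ ENNReal.ofReal B
        * ENNReal.ofReal (Cw * (Cφ * Ma) / lam0) * (if 0 ≤ j then 0 else Fa ((-j).toNat)) := by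
      intro j
      by_cases h0 : 0 ≤ j
      · have hv : ∀ k, D3 k j = 0 := fun k => by
          simp only [hD3def]
          rw [if_neg (fun hcon => hcon.1 h0)]
        rw [tsum_congr hv, tsum_zero, if_pos h0, mul_zero]
      · rw [if_neg h0]
        have h1 : ∀ k : ℕ, D3 k j ≤ ENNReal.ofReal (b (-((k:ℤ)+1) - j))
            * (ENNReal.ofReal (Cw * (Cφ * Ma) / lam0) * Fa ((-j).toNat)) := by
          intro k
          simp only [hD3def]
          split_ifs with hcon
          · rw [ENNReal.ofReal_mul (hb0 _)]
            exact le_of_eq (mul_assoc _ _ _)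
          · exact zero_le
        calc (∑' k : ℕ, D3 k j)
            ≤ ∑' k : ℕ, ENNReal.ofReal (b (-((k:ℤ)+1) - j))
              * (ENNReal.ofReal (Cw * (Cφ * Ma) / lam0) * Fa ((-j).toNat)) :=
              ENNReal.tsum_le_tsum h1
          _ = (∑' k : ℕ, ENNReal.ofReal (b (-((k:ℤ)+1) - j)))
              * (ENNReal.ofReal (Cw * (Cφ * Ma) / lam0) * Fa ((-j).toNat)) :=
              ENNReal.tsum_mul_right
          _ ≤ ENNReal.ofReal B
              * (ENNReal.ofReal (Cw * (Cφ * Ma) / lam0) * Fa ((-j).toNat)) := by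
              refine mul_le_mul_left ?_ _
              have h2 := ENNReal.tsum_comp_le_tsum_of_injective
                (f := fun k : ℕ => -((k:ℤ)+1) - j) (fun p q hpq => by
                  dsimp only at hpq; omega) (fun z => ENNReal.ofReal (b z))
              refine le_trans h2 (le_of_eq ?_)
              rw [← ENNReal.ofReal_tsum_of_nonneg hb0 hb, hB]
          _ = ENNReal.ofReal B * ENNReal.ofReal (Cw * (Cφ * Ma) / lam0) * Fa ((-j).toNat) :=
              (mul_assoc _ _ _).symm
    refine le_trans (ENNReal.tsum_le_tsum hj) ?_
    rw [ENNReal.tsum_mul_left]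
    have hFsum : (∑' j : ℤ, (if 0 ≤ j then (0:ℝ≥0∞) else Fa ((-j).toNat)))
        = ∑' n : ℕ, Fa (n+1) := by
      have hinj3 : Function.Injective (fun n : ℕ => -((n:ℤ)+1)) := fun p q hpq => by
        dsimp only at hpq; omega
      have hsupp : Function.support (fun j : ℤ => if 0 ≤ j then (0:ℝ≥0∞) else Fa ((-j).toNat))
          ⊆ Set.range (fun n : ℕ => -((n:ℤ)+1)) := by
        intro j hj2
        rw [Function.mem_support] at hj2
        by_cases h0 : 0 ≤ j
        · rw [if_pos h0] at hj2
          exact absurd rfl hj2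
        · exact ⟨(-j-1).toNat, by dsimp only; omega⟩
      have heq := hinj3.tsum_eq hsupp
      rw [← heq]
      refine tsum_congr fun n => ?_
      rw [if_neg (by omega : ¬ ((0:ℤ) ≤ -((n:ℤ)+1)))]
      congr 1
    rw [hFsum]
    calc ENNReal.ofReal B * ENNReal.ofReal (Cw * (Cφ * Ma) / lam0) * (∑' n : ℕ, Fa (n+1))
        ≤ ENNReal.ofReal B * ENNReal.ofReal (Cw * (Cφ * Ma) / lam0) * 1 :=
          mul_le_mul_right hSFa _
      _ = ENNReal.ofReal (B * (Cw * (Cφ * Ma) / lam0)) := by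
          rw [mul_one, ← ENNReal.ofReal_mul hB0]
  have hfinal : (∑' k : ℕ, ENNReal.ofReal (Φ (c (-((k:ℤ)+1)) * φ (k+1) / lam0))
      * ENNReal.ofReal (w (k+1))) ≤ 1 := by
    refine le_trans hTc (le_trans (add_le_add (add_le_add hS1 hS2) hS3) ?_)
    rw [← ENNReal.ofReal_add (mul_nonneg hA0 hc1) (mul_nonneg hA0 hcoeb),
      ← ENNReal.ofReal_add (add_nonneg (mul_nonneg hA0 hc1) (mul_nonneg hA0 hcoeb))
        (mul_nonneg hB0 hcoea)]
    rw [show (1:ℝ≥0∞) = ENNReal.ofReal 1 from ENNReal.ofReal_one.symm]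
    refine ENNReal.ofReal_le_ofReal ?_
    have he : A * (Mb / lam0) + A * (Cw * (Cφ * Mb) / lam0) + B * (Cw * (Cφ * Ma) / lam0)
        = (A * Mb + Cw * Cφ * (A * Mb) + Cw * Cφ * (B * Ma)) / lam0 := by ring
    rw [he, div_le_one hlampos, hlam0def]
    nlinarith [mul_nonneg (sub_nonneg.2 hCφ1) (mul_nonneg hA0 hMbpos.le),
      mul_nonneg hCφpos.le (mul_nonneg hB0 hMapos.le)]
  exact ⟨hfinal, csInf_le ⟨0, fun y hy => hy.1.le⟩ ⟨hlampos, hfinal⟩⟩
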